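/- A nonzero polynomial p ∈ ℝ[x] is nonnegative on all of ℝ if and only if p is a sum of two squares of polynomials in ℝ[x]. -/

import Mathlib

open Polynomial

lemma sq_dvd_of_root_nonneg (p : ℝ[X]) (hnn : ∀ x : ℝ, 0 ≤ p.eval x)
    {r : ℝ} (hr : p.eval r = 0) : (X - C r) ^ 2 ∣ p := by
  have hmin : IsLocalMin (fun x => p.eval x) r :=
    Filter.Eventually.of_forall fun x => by simp only [hr]; exact hnn x
  have hder : p.derivative.eval r = 0 := by
    have := hmin.deriv_eq_zero
    rwa [Polynomial.deriv] at this
  obtain ⟨q, hq⟩ := dvd_iff_isRoot.mpr hr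
  have hq' : q.eval r = 0 := by
    have h1 : p.derivative = (X - C r) * q.derivative + q := by
      rw [hq]; simp [mul_comm]
    have h2 := congrArg (Polynomial.eval r) h1
    simpa [hder] using h2.symm
  obtain ⟨s, hs⟩ := dvd_iff_isRoot.mpr hq'
  exact ⟨s, by rw [hq, hs]; ring⟩

lemma nonneg_key : ∀ n : ℕ, ∀ p : ℝ[X], p ≠ 0 → p.natDegree = n →
    (∀ x : ℝ, 0 ≤ p.eval x) → ∃ a b : ℝ[X], p = a ^ 2 + b ^ 2 := by
  intro n
  induction n using Nat.strong_induction_on with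
  | _ n IH =>
    intro p hp hdeg hnn
    rcases Nat.eq_zero_or_pos n with h0 | hpos
    · have hc : p = C (p.coeff 0) := Polynomial.eq_C_of_natDegree_eq_zero (hdeg.trans h0)
      have h0' : 0 ≤ p.coeff 0 := by
        have := hnn 0
        rwa [hc, eval_C] at this
      refine ⟨C (Real.sqrt (p.coeff 0)), 0, ?_⟩
      rw [← C_pow, Real.sq_sqrt h0', ← hc]
      norm_num
    · have hdegpos : 0 < (p.map (algebraMap ℝ ℂ)).degree := by
        rw [degree_map]
        exact natDegree_pos_iff_degree_pos.mp (hdeg ▸ hpos)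
      obtain ⟨z, hz⟩ := Complex.exists_root hdegpos
      have haev : aeval z p = 0 := by
        rwa [aeval_def, eval₂_eq_eval_map]
      rcases eq_or_ne z.im 0 with him | him
      · -- real root case
        have hre : p.eval z.re = 0 := by
          have hzz : (z : ℂ) = ((z.re : ℝ) : ℂ) := by
            rw [Complex.ext_iff]; simp [him]
          rw [hzz, show ((z.re : ℝ) : ℂ) = algebraMap ℝ ℂ z.re from rfl,
            aeval_algebraMap_apply] at haev
          simpa using haev
        obtain ⟨s, hs⟩ := sq_dvd_of_root_nonneg p hnn hre
        have hs0 : s ≠ 0 := by rintro rfl; rw [mul_zero] at hs; exact hp hs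
        have hXr : ((X - C z.re) ^ 2 : ℝ[X]) ≠ 0 := pow_ne_zero _ (X_sub_C_ne_zero _)
        have hnd : n = 2 + s.natDegree := by
          rw [← hdeg, hs, natDegree_mul hXr hs0, natDegree_pow, natDegree_X_sub_C]
        have hsnn : ∀ x : ℝ, 0 ≤ s.eval x := by
          have hne : ∀ x : ℝ, x ≠ z.re → 0 ≤ s.eval x := by
            intro x hx
            have hp' := hnn x
            rw [hs, eval_mul, eval_pow, eval_sub, eval_X, eval_C] at hp'
            nlinarith [sq_pos_of_ne_zero (sub_ne_zero.mpr hx)]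
          intro x
          by_cases hx : x = z.re
          · subst hx
            have ht : Filter.Tendsto (fun y => s.eval y) (nhdsWithin z.re {z.re}ᶜ)
                (nhds (s.eval z.re)) :=
              (s.continuous.tendsto z.re).mono_left nhdsWithin_le_nhds
            exact ge_of_tendsto ht (Filter.eventually_of_mem self_mem_nhdsWithin
              fun y hy => hne y hy)
          · exact hne x hx
        obtain ⟨a, b, hab⟩ := IH s.natDegree (by omega) s hs0 rfl hsnn
        exact ⟨(X - C z.re) * a, (X - C z.re) * b, by rw [hs, hab]; ring⟩
      · -- nonreal root case
        obtain ⟨s, hs⟩ := p.quadratic_dvd_of_aeval_eq_zero_im_ne_zero haev him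
        set Q : ℝ[X] := X ^ 2 - C (2 * z.re) * X + C (‖z‖ ^ 2) with hQdef
        have hn : (‖z‖ : ℝ) ^ 2 = z.re ^ 2 + z.im ^ 2 := by
          rw [Complex.sq_norm, Complex.normSq_apply]; ring
        have hC2 : (C (2 * z.re) : ℝ[X]) = 2 * C z.re := by
          rw [C_mul, map_ofNat]
        have hQ : Q = (X - C z.re) ^ 2 + (C z.im) ^ 2 := by
          rw [hQdef, hC2, hn, C_add, C_pow, C_pow]; ring
        have hQpos : ∀ x : ℝ, 0 < Q.eval x := by
          intro x
          rw [hQ]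
          simp only [eval_add, eval_pow, eval_sub, eval_X, eval_C]
          have : z.im ^ 2 > 0 := by positivity
          nlinarith [sq_nonneg (x - z.re)]
        have hQ0 : Q ≠ 0 := fun h => by simpa [h] using hQpos 0
        have hs0 : s ≠ 0 := by rintro rfl; rw [mul_zero] at hs; exact hp hs
        have hQdeg : Q.natDegree = 2 := by
          rw [hQdef]; compute_degree!
        have hnd : n = 2 + s.natDegree := by
          rw [← hdeg, hs, natDegree_mul hQ0 hs0, hQdeg]
        have hsnn : ∀ x : ℝ, 0 ≤ s.eval x := by
          intro x
          have hp' := hnn x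
          rw [hs, eval_mul] at hp'
          nlinarith [hQpos x]
        obtain ⟨a, b, hab⟩ := IH s.natDegree (by omega) s hs0 rfl hsnn
        refine ⟨(X - C z.re) * a - C z.im * b, (X - C z.re) * b + C z.im * a, ?_⟩
        rw [hs, hQ, hab]; ring

/-- A nonzero univariate real polynomial is nonnegative on ℝ if and only if
it is a sum of two squares of polynomials. -/
theorem nonneg_iff_sum_two_squares (p : Polynomial ℝ) (hp : p ≠ 0) :
    (∀ x : ℝ, 0 ≤ p.eval x) ↔ ∃ a b : Polynomial ℝ, p = a ^ 2 + b ^ 2 := by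
  constructor
  · exact nonneg_key p.natDegree p hp rfl
  · rintro ⟨a, b, rfl⟩ x
    simp only [eval_add, eval_pow]
    positivity
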